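/- Let Γ be a discrete subring of ℂ containing 1, let z ∈ ℂ' and let (a_n)_{n≥0} be a continued fraction expansion of z over Γ with relative errors (δ_n). If N ⊆ ℕ is a neat subset for the expansion, then {δ_n : n ∈ N} is a bounded subset of ℂ. -/

import Mathlib

/-- The quotient field of a subring `Γ` of `ℂ`, as a subset of `ℂ`. -/
def quotField (Γ : Subring ℂ) : Set ℂ :=
  {x | ∃ p ∈ Γ, ∃ q ∈ Γ, q ≠ 0 ∧ x = p / q}

/-- `(a n)` is a continued fraction expansion of `z` over `Γ`, with iteration
sequence `(zs n)`: `zs 0 = z`, `0 < |zs n - a n| < 1` and `zs (n+1) = (zs n - a n)⁻¹`. -/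
def IsCFE (Γ : Subring ℂ) (z : ℂ) (a zs : ℕ → ℂ) : Prop :=
  (∀ n, a n ∈ Γ) ∧ zs 0 = z ∧
    (∀ n, 0 < ‖zs n - a n‖ ∧ ‖zs n - a n‖ < 1) ∧
    (∀ n, zs (n + 1) = (zs n - a n)⁻¹)

/-- The Q-pair of a sequence of partial quotients, with indices shifted by one:
`p (n+1)` is the paper's `p_n` and `q (n+1)` is the paper's `q_n`
(so `p 0 = p_{-1} = 1` and `q 0 = q_{-1} = 0`). -/
def IsQPair (a p q : ℕ → ℂ) : Prop :=
  p 0 = 1 ∧ p 1 = a 0 ∧ (∀ n, p (n + 2) = a (n + 1) * p (n + 1) + p n) ∧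
  q 0 = 0 ∧ q 1 = 1 ∧ (∀ n, q (n + 2) = a (n + 1) * q (n + 1) + q n)


/-- The sequence of relative errors `δ_n = q_n (q_n z - p_n)` (index shifted by one
in `p`, `q`, so `relErr z p q n` is the paper's `δ_n`). -/
def relErr (z : ℂ) (p q : ℕ → ℂ) (n : ℕ) : ℂ :=
  q (n + 1) * (q (n + 1) * z - p (n + 1))

/-- `N ⊆ ℕ` is a neat subset for the expansion: `|q_{n-1}| ≤ |q_n|` for all `n ∈ N`
and `liminf_{n ∈ N} |z_{n+1}| > 1` (there is `α > 1` with `|z_{n+1}| ≥ α` for all but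
finitely many `n ∈ N`). Indices of `q` are shifted by one, so `q n` is the paper's `q_{n-1}`. -/
def IsNeat (zs q : ℕ → ℂ) (N : Set ℕ) : Prop :=
  (∀ n ∈ N, ‖q n‖ ≤ ‖q (n + 1)‖) ∧
  ∃ α : ℝ, 1 < α ∧ {n | n ∈ N ∧ ‖zs (n + 1)‖ < α}.Finite

/-- Proposition 2.6: on a neat subset the relative errors are bounded. -/
theorem stmt_3 (Γ : Subring ℂ) (hdisc : DiscreteTopology Γ)
    (z : ℂ) (hz : z ∉ quotField Γ)
    (a zs p q : ℕ → ℂ) (hcf : IsCFE Γ z a zs) (hpq : IsQPair a p q)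
    (N : Set ℕ) (hN : IsNeat zs q N) :
    ∃ M : ℝ, ∀ n ∈ N, ‖relErr z p q n‖ ≤ M := by
  obtain ⟨ha, hz0, habs, hrec⟩ := hcf
  obtain ⟨hp0, hp1, hp, hq0, hq1, hq⟩ := hpq
  obtain ⟨hmono, α, hα, hfin⟩ := hN
  have hne : ∀ n, zs n - a n ≠ 0 := fun n =>
    norm_ne_zero_iff.mp (ne_of_gt (habs n).1)
  have keymul : ∀ n, zs (n + 1) * (zs n - a n) = 1 := fun n => by
    rw [hrec n]; exact inv_mul_cancel₀ (hne n)
  have key : ∀ n, (zs (n + 1) * q (n + 1) + q n) * z = zs (n + 1) * p (n + 1) + p n := by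
    intro n
    induction n with
    | zero =>
      rw [hp0, hp1, hq0, hq1]
      linear_combination keymul 0 - zs 1 * hz0
    | succ n ih =>
      rw [hp n, hq n]
      linear_combination zs (n + 2) * ih + (p (n + 1) - q (n + 1) * z) * keymul (n + 1)
  have det : ∀ n, p n * q (n + 1) - p (n + 1) * q n = (-1 : ℂ) ^ n := by
    intro n
    induction n with
    | zero => simp [hp0, hp1, hq0, hq1]
    | succ n ih =>
      rw [hp n, hq n]
      linear_combination - ih
  have hDform : ∀ n, (zs (n + 1) * q (n + 1) + q n) * (q (n + 1) * z - p (n + 1)) = (-1 : ℂ) ^ n := by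
    intro n
    linear_combination q (n + 1) * key n + det n
  obtain ⟨C, hC⟩ := (hfin.image (fun n => ‖relErr z p q n‖)).bddAbove
  refine ⟨max C (1 / (α - 1)), fun n hn => ?_⟩
  by_cases hS : ‖zs (n + 1)‖ < α
  · exact le_max_of_le_left (hC (Set.mem_image_of_mem _ ⟨hn, hS⟩))
  · push_neg at hS
    have hq1ne : q (n + 1) ≠ 0 := by
      intro h0
      have hqn0 : q n = 0 := by
        have h := hmono n hn
        rw [h0] at h
        simp only [norm_zero] at h
        exact norm_eq_zero.mp (le_antisymm h (norm_nonneg _))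
      have hd := det n
      rw [h0, hqn0] at hd
      simp at hd
      exact pow_ne_zero n (by norm_num : (-1 : ℂ) ≠ 0) hd.symm
    have hqpos : 0 < ‖q (n + 1)‖ := norm_pos_iff.mpr hq1ne
    set D := zs (n + 1) * q (n + 1) + q n with hD
    have hDlow : (α - 1) * ‖q (n + 1)‖ ≤ ‖D‖ := by
      have h1 : ‖zs (n + 1) * q (n + 1)‖ - ‖q n‖ ≤ ‖D‖ := by
        have := norm_sub_norm_le (zs (n + 1) * q (n + 1)) (-q n)
        simpa [sub_neg_eq_add] using this
      have h2 : ‖zs (n + 1) * q (n + 1)‖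
          = ‖zs (n + 1)‖ * ‖q (n + 1)‖ := norm_mul _ _
      have h3 : α * ‖q (n + 1)‖ ≤ ‖zs (n + 1)‖ * ‖q (n + 1)‖ :=
        mul_le_mul_of_nonneg_right hS (norm_nonneg _)
      have h4 : ‖q n‖ ≤ ‖q (n + 1)‖ := hmono n hn
      nlinarith
    have hDpos : 0 < ‖D‖ := lt_of_lt_of_le (by nlinarith) hDlow
    have habsform : ‖D‖ * ‖q (n + 1) * z - p (n + 1)‖ = 1 := by
      rw [← norm_mul]
      rw [hDform n]
      simp
    have hrel : ‖relErr z p q n‖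
        = ‖q (n + 1)‖ / ‖D‖ := by
      rw [relErr, norm_mul]
      have : ‖q (n + 1) * z - p (n + 1)‖ = 1 / ‖D‖ := by
        field_simp at habsform ⊢
        linarith [habsform]
      rw [this]
      ring
    rw [hrel]
    refine le_max_of_le_right ?_
    rw [div_le_div_iff₀ hDpos (by linarith)]
    calc ‖q (n + 1)‖ * (α - 1) = (α - 1) * ‖q (n + 1)‖ := by ring
    _ ≤ ‖D‖ := hDlow
    _ = 1 * ‖D‖ := (one_mul _).symm
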